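/- Let G be an n_p × n_e matrix with entries in {0,1}, B = GᵀG, diagonal ordered nonincreasingly (B₁₁ maximal), and suppose every row of G has at most d ones. Then for every k > 1, λ_k / λ₁ ≤ (B_{kk} / B₁₁) · d, where λ₁ ≥ λ₂ ≥ ... are the eigenvalues of B (assuming λ₁ > 0 and B₁₁ > 0). -/
import Mathlib

open Matrix Finset

theorem stmt1 (np n d : ℕ) (G : Matrix (Fin np) (Fin (n+1)) ℝ)
    (hG : ∀ i j, G i j = 0 ∨ G i j = 1)
    (hrow : ∀ i, (Finset.univ.filter fun j => G i j = 1).card ≤ d)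
    (B : Matrix (Fin (n+1)) (Fin (n+1)) ℝ) (hB : B = Gᵀ * G)
    (hdiag : ∀ k l : Fin (n+1), k ≤ l → B l l ≤ B k k)
    (ev : Fin (n+1) → ℝ) (u : Fin (n+1) → Fin (n+1) → ℝ)
    (huorth : ∀ i j, (∑ t, u i t * u j t) = if i = j then (1:ℝ) else 0)
    (heig : ∀ i, B.mulVec (u i) = ev i • u i)
    (hev : Antitone ev)
    (hlam1 : 0 < ev 0) (hB11 : 0 < B 0 0) :
    ∀ k : Fin (n+1), 0 < (k : ℕ) → ev k / ev 0 ≤ (B k k / B 0 0) * d := by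
  -- basic positivity facts about G and B
  have hG0 : ∀ i j, 0 ≤ G i j := by
    intro i j; rcases hG i j with h | h <;> rw [h] <;> norm_num
  have hBnn : ∀ a b, 0 ≤ B a b := by
    intro a b
    rw [hB]
    simp only [Matrix.mul_apply, Matrix.transpose_apply]
    exact Finset.sum_nonneg fun m _ => mul_nonneg (hG0 m a) (hG0 m b)
  have hBsym : ∀ a b, B a b = B b a := by
    intro a b
    rw [hB]
    simp only [Matrix.mul_apply, Matrix.transpose_apply]
    exact Finset.sum_congr rfl fun m _ => mul_comm _ _
  -- row sums of G are at most d
  have hGd : ∀ i, (∑ l, G i l) ≤ (d : ℝ) := by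
    intro i
    have : (∑ l, G i l) = ((Finset.univ.filter fun j => G i j = 1).card : ℝ) := by
      rw [Finset.card_filter]
      push_cast
      refine Finset.sum_congr rfl fun l _ => ?_
      rcases hG i l with h | h <;> simp [h]
    rw [this]
    exact_mod_cast hrow i
  -- diagonal of B as sum of column entries of G
  have hBdiagG : ∀ a, B a a = ∑ m, G m a := by
    intro a
    rw [hB]
    simp only [Matrix.mul_apply, Matrix.transpose_apply]
    refine Finset.sum_congr rfl fun m _ => ?_
    rcases hG m a with h | h <;> simp [h]
  -- row sums of B are at most d * (diagonal entry)
  have hrowB : ∀ a, (∑ l, B a l) ≤ (d : ℝ) * B a a := by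
    intro a
    have h1 : (∑ l, B a l) = ∑ m, G m a * (∑ l, G m l) := by
      rw [hB]
      simp only [Matrix.mul_apply, Matrix.transpose_apply]
      rw [Finset.sum_comm]
      exact Finset.sum_congr rfl fun m _ => by rw [Finset.mul_sum]
    rw [h1, hBdiagG, Finset.mul_sum]
    refine Finset.sum_le_sum fun m _ => ?_
    calc G m a * (∑ l, G m l) ≤ G m a * d := by
          exact mul_le_mul_of_nonneg_left (hGd m) (hG0 m a)
      _ = (d:ℝ) * G m a := mul_comm _ _
  -- column orthonormality of u
  have hcol : ∀ a b : Fin (n+1), (∑ i, u i a * u i b) = if a = b then (1:ℝ) else 0 := by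
    have hU : (Matrix.of u) * (Matrix.of u)ᵀ = 1 := by
      ext i j
      simp only [Matrix.mul_apply, Matrix.transpose_apply, Matrix.of_apply, Matrix.one_apply]
      exact huorth i j
    have hU2 : (Matrix.of u)ᵀ * (Matrix.of u) = 1 := mul_eq_one_comm.mp hU
    intro a b
    have := congrFun (congrFun hU2 a) b
    simp only [Matrix.mul_apply, Matrix.transpose_apply, Matrix.of_apply, Matrix.one_apply] at this
    exact this
  -- B₀₀ ≤ ev 0
  have hB00le : B 0 0 ≤ ev 0 := by
    have key : B 0 0 = ∑ i, ev i * (u i 0 * u i 0) := by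
      have h1 : ∀ i : Fin (n+1), ev i * (u i 0 * u i 0) = u i 0 * (∑ t, B 0 t * u i t) := by
        intro i
        have := congrFun (heig i) 0
        simp only [Matrix.mulVec, dotProduct, Pi.smul_apply, smul_eq_mul] at this
        rw [← mul_assoc, mul_comm (ev i) (u i 0), mul_assoc, ← this]
      calc B 0 0 = ∑ t, B 0 t * (∑ i, u i 0 * u i t) := by
              rw [Finset.sum_congr rfl fun t _ => by rw [hcol 0 t]]
              simp
        _ = ∑ t, ∑ i, B 0 t * (u i 0 * u i t) := by
              refine Finset.sum_congr rfl fun t _ => ?_; rw [Finset.mul_sum]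
        _ = ∑ i, ∑ t, B 0 t * (u i 0 * u i t) := Finset.sum_comm
        _ = ∑ i, u i 0 * (∑ t, B 0 t * u i t) := by
              refine Finset.sum_congr rfl fun i _ => ?_
              rw [Finset.mul_sum]
              exact Finset.sum_congr rfl fun t _ => by ring
        _ = ∑ i, ev i * (u i 0 * u i 0) := by
              refine Finset.sum_congr rfl fun i _ => (h1 i).symm
    have hsum1 : (∑ i, u i 0 * u i 0) = 1 := by
      have := hcol 0 0; simpa using this
    calc B 0 0 = ∑ i, ev i * (u i 0 * u i 0) := key
      _ ≤ ∑ i, ev 0 * (u i 0 * u i 0) := by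
            refine Finset.sum_le_sum fun i _ => ?_
            exact mul_le_mul_of_nonneg_right (hev (Fin.zero_le i)) (mul_self_nonneg _)
      _ = ev 0 := by rw [← Finset.mul_sum, hsum1, mul_one]
  intro k hk
  -- main claim : ev k ≤ d * B k k
  have main : ev k ≤ (d : ℝ) * B k k := by
    set K : ℕ := (k : ℕ) with hK
    have hKn : K < n + 1 := k.isLt
    have hemb : ∀ i : Fin (K+1), (i : ℕ) < n + 1 := fun i => by omega
    set emb : Fin (K+1) → Fin (n+1) := fun i => ⟨i, hemb i⟩ with hembdef
    have hembinj : Function.Injective emb := by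
      intro a b hab
      apply Fin.ext
      simpa [hembdef] using congrArg Fin.val hab
    -- find nonzero c with ∑ i, c i * u (emb i) j = 0 for all j < K
    set M : Matrix (Fin K) (Fin (K+1)) ℝ :=
      fun j i => u (emb i) ⟨j, lt_trans j.isLt hKn⟩ with hM
    obtain ⟨c, hc0, hcker⟩ : ∃ c : Fin (K+1) → ℝ, c ≠ 0 ∧ M.mulVecLin c = 0 := by
      by_contra h
      push_neg at h
      have hinj : Function.Injective M.mulVecLin := by
        rw [← LinearMap.ker_eq_bot, LinearMap.ker_eq_bot']
        intro m hm
        by_contra hm0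
        exact h m hm0 hm
      have := LinearMap.finrank_le_finrank_of_injective hinj
      simp [Module.finrank_fin_fun] at this
    set x : Fin (n+1) → ℝ := fun j => ∑ i, c i * u (emb i) j with hx
    have hx0 : ∀ j : Fin (n+1), (j : ℕ) < K → x j = 0 := by
      intro j hj
      have := congrFun hcker ⟨j, hj⟩
      simp only [Matrix.mulVecLin_apply, Matrix.mulVec, dotProduct, Pi.zero_apply, hM] at this
      rw [hx]
      have hj' : (⟨(j:ℕ), j.isLt⟩ : Fin (n+1)) = j := by apply Fin.ext; rfl
      calc (∑ i, c i * u (emb i) j)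
          = ∑ i, M ⟨j, hj⟩ i * c i := by
            refine Finset.sum_congr rfl fun i _ => ?_
            rw [hM, mul_comm]
        _ = 0 := this
    -- orthonormality along emb
    have huorth' : ∀ i i' : Fin (K+1),
        (∑ t, u (emb i) t * u (emb i') t) = if i = i' then (1:ℝ) else 0 := by
      intro i i'
      rw [huorth (emb i) (emb i')]
      by_cases h : i = i'
      · simp [h]
      · have : emb i ≠ emb i' := fun hc => h (hembinj hc)
        simp [h, this]
    -- expansion lemma
    have expand : ∀ (y : Fin (n+1) → ℝ),
        (∑ j, x j * y j) = ∑ i, c i * (∑ j, u (emb i) j * y j) := by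
      intro y
      calc (∑ j, x j * y j)
          = ∑ j, ∑ i, c i * (u (emb i) j * y j) := by
            refine Finset.sum_congr rfl fun j _ => ?_
            rw [hx, Finset.sum_mul]
            exact Finset.sum_congr rfl fun i _ => by ring
        _ = ∑ i, ∑ j, c i * (u (emb i) j * y j) := Finset.sum_comm
        _ = ∑ i, c i * (∑ j, u (emb i) j * y j) := by
            refine Finset.sum_congr rfl fun i _ => ?_
            rw [Finset.mul_sum]
    have hxu : ∀ i' : Fin (K+1), (∑ j, x j * u (emb i') j) = c i' := by
      intro i'
      rw [expand (fun j => u (emb i') j)]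
      calc (∑ i, c i * (∑ j, u (emb i) j * u (emb i') j))
          = ∑ i, c i * (if i = i' then (1:ℝ) else 0) := by
            refine Finset.sum_congr rfl fun i _ => ?_
            rw [huorth' i i']
        _ = c i' := by simp
    have hnormx : (∑ j, x j * x j) = ∑ i, c i * c i := by
      rw [expand x]
      refine Finset.sum_congr rfl fun i _ => ?_
      congr 1
      rw [← hxu i]
      exact Finset.sum_congr rfl fun j _ => mul_comm _ _
    -- value of B.mulVec x
    have hBx : ∀ j, B.mulVec x j = ∑ i, c i * (ev (emb i) * u (emb i) j) := by
      intro j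
      have heig' : ∀ i : Fin (K+1), (∑ t, B j t * u (emb i) t) = ev (emb i) * u (emb i) j := by
        intro i
        have := congrFun (heig (emb i)) j
        simpa [Matrix.mulVec, dotProduct] using this
      calc B.mulVec x j = ∑ t, B j t * x t := by
            simp [Matrix.mulVec, dotProduct]
        _ = ∑ t, ∑ i, c i * (B j t * u (emb i) t) := by
            refine Finset.sum_congr rfl fun t _ => ?_
            rw [hx, Finset.mul_sum]
            exact Finset.sum_congr rfl fun i _ => by ring
        _ = ∑ i, ∑ t, c i * (B j t * u (emb i) t) := Finset.sum_comm
        _ = ∑ i, c i * (ev (emb i) * u (emb i) j) := by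
            refine Finset.sum_congr rfl fun i _ => ?_
            rw [← Finset.mul_sum, heig' i]
    -- Rayleigh quotient value
    have hRay : (∑ j, x j * B.mulVec x j) = ∑ i, ev (emb i) * (c i * c i) := by
      calc (∑ j, x j * B.mulVec x j)
          = ∑ j, ∑ i, (c i * ev (emb i)) * (x j * u (emb i) j) := by
            refine Finset.sum_congr rfl fun j _ => ?_
            rw [hBx j, Finset.mul_sum]
            exact Finset.sum_congr rfl fun i _ => by ring
        _ = ∑ i, ∑ j, (c i * ev (emb i)) * (x j * u (emb i) j) := Finset.sum_comm
        _ = ∑ i, ev (emb i) * (c i * c i) := by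
            refine Finset.sum_congr rfl fun i _ => ?_
            rw [← Finset.mul_sum, hxu i]
            ring
    -- positivity of the norm
    obtain ⟨i0, hi0⟩ : ∃ i, c i ≠ 0 := Function.ne_iff.mp hc0
    have hSpos : 0 < ∑ i, c i * c i := by
      refine Finset.sum_pos' (fun i _ => mul_self_nonneg _) ⟨i0, Finset.mem_univ i0, ?_⟩
      exact mul_self_pos.mpr hi0
    -- lower bound on Rayleigh
    have hlow : ev k * (∑ i, c i * c i) ≤ ∑ j, x j * B.mulVec x j := by
      rw [hRay, Finset.mul_sum]
      refine Finset.sum_le_sum fun i _ => ?_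
      have hle : emb i ≤ k := by
        have : (i : ℕ) ≤ K := Nat.lt_succ_iff.mp i.isLt
        exact this
      exact mul_le_mul_of_nonneg_right (hev hle) (mul_self_nonneg _)
    -- upper bound on Rayleigh
    have hup : (∑ j, x j * B.mulVec x j) ≤ ((d:ℝ) * B k k) * ∑ i, c i * c i := by
      calc (∑ j, x j * B.mulVec x j)
          = ∑ j, ∑ l, B j l * (x j * x l) := by
            refine Finset.sum_congr rfl fun j _ => ?_
            simp only [Matrix.mulVec, dotProduct]
            rw [Finset.mul_sum]
            exact Finset.sum_congr rfl fun l _ => by ring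
        _ ≤ ∑ j, ∑ l, B j l * ((x j * x j + x l * x l)/2) := by
            refine Finset.sum_le_sum fun j _ => Finset.sum_le_sum fun l _ => ?_
            refine mul_le_mul_of_nonneg_left ?_ (hBnn j l)
            nlinarith [sq_nonneg (x j - x l)]
        _ = ∑ j, (x j * x j) * (∑ l, B j l) := by
            have h2 : (∑ j, ∑ l, B j l * (x l * x l)) = ∑ j, (x j * x j) * (∑ l, B j l) := by
              rw [Finset.sum_comm]
              refine Finset.sum_congr rfl fun l _ => ?_
              rw [Finset.sum_mul, Finset.mul_sum]
              exact Finset.sum_congr rfl fun j _ => by rw [hBsym l j]; ring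
            have h1 : (∑ j, ∑ l, B j l * (x j * x j)) = ∑ j, (x j * x j) * (∑ l, B j l) := by
              refine Finset.sum_congr rfl fun j _ => ?_
              rw [← Finset.sum_mul]
              exact mul_comm _ _
            have e : ∀ j l : Fin (n+1), B j l * ((x j * x j + x l * x l)/2)
                = B j l * (x j * x j) / 2 + B j l * (x l * x l) / 2 := fun j l => by ring
            simp_rw [e, Finset.sum_add_distrib, ← Finset.sum_div]
            rw [h1, h2]
            ring
        _ ≤ ∑ j, (x j * x j) * ((d:ℝ) * B k k) := by
            refine Finset.sum_le_sum fun j _ => ?_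
            by_cases hj : (j : ℕ) < K
            · rw [hx0 j hj]; simp
            · push_neg at hj
              have hkj : k ≤ j := hj
              refine mul_le_mul_of_nonneg_left ?_ (mul_self_nonneg _)
              calc (∑ l, B j l) ≤ (d:ℝ) * B j j := hrowB j
                _ ≤ (d:ℝ) * B k k := by
                    exact mul_le_mul_of_nonneg_left (hdiag k j hkj) (Nat.cast_nonneg d)
        _ = ((d:ℝ) * B k k) * ∑ i, c i * c i := by
            rw [← hnormx, ← Finset.sum_mul]
            ring
    have := le_trans hlow hup
    exact le_of_mul_le_mul_right (by linarith) hSpos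
  -- conclude
  have hBkknn : 0 ≤ B k k := hBnn k k
  have hd0 : (0:ℝ) ≤ (d:ℝ) * B k k := mul_nonneg (Nat.cast_nonneg d) hBkknn
  have step1 : ev k / ev 0 ≤ ((d:ℝ) * B k k) / ev 0 :=
    (div_le_div_iff_of_pos_right hlam1).mpr main
  have step2 : ((d:ℝ) * B k k) / ev 0 ≤ ((d:ℝ) * B k k) / B 0 0 :=
    div_le_div_of_nonneg_left hd0 hB11 hB00le
  have step3 : ((d:ℝ) * B k k) / B 0 0 = (B k k / B 0 0) * d := by ring
  linarith
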